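/- Let C be a one-hole context over n variables and let k be the number of negation nodes on the hole path of C. Then for every Boolean formula ψ over n variables and every assignment x ∈ {0,1}^n that is relevant for C: eval(C[ψ], x) = eval(ψ, x) XOR (k mod 2). In particular, a relevant example is correlated (root value equals hole value) when the number of negations on the root–node path is even, and anticorrelated when it is odd. -/

import Mathlib

/-- Boolean formulas over `n` variables. -/
inductive BFormula (n : ℕ) : Type where
  | var : Fin n → BFormula n
  | not : BFormula n → BFormula n
  | and : BFormula n → BFormula n → BFormula n
  | or  : BFormula n → BFormula n → BFormula n

/-- Evaluation of a Boolean formula on an assignment. -/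
def BFormula.eval {n : ℕ} : BFormula n → (Fin n → Bool) → Bool
  | .var i, x => x i
  | .not φ, x => !(φ.eval x)
  | .and φ ψ, x => φ.eval x && ψ.eval x
  | .or φ ψ, x => φ.eval x || ψ.eval x

/-- One-hole contexts over `n` variables: a Boolean formula with exactly one hole. -/
inductive Ctx (n : ℕ) : Type where
  | hole : Ctx n
  | not : Ctx n → Ctx n
  | andL : Ctx n → BFormula n → Ctx n
  | andR : BFormula n → Ctx n → Ctx n
  | orL : Ctx n → BFormula n → Ctx n
  | orR : BFormula n → Ctx n → Ctx n

/-- `C.fill ψ` replaces the hole of `C` by the formula `ψ`. -/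
def Ctx.fill {n : ℕ} : Ctx n → BFormula n → BFormula n
  | .hole, ψ => ψ
  | .not C, ψ => .not (C.fill ψ)
  | .andL C φ, ψ => .and (C.fill ψ) φ
  | .andR φ C, ψ => .and φ (C.fill ψ)
  | .orL C φ, ψ => .or (C.fill ψ) φ
  | .orR φ C, ψ => .or φ (C.fill ψ)

/-- `C.evalWith h x` evaluates `C` at `x`, the hole taking the value `h x`. -/
def Ctx.evalWith {n : ℕ} : Ctx n → ((Fin n → Bool) → Bool) → (Fin n → Bool) → Bool
  | .hole, h, x => h x
  | .not C, h, x => !(C.evalWith h x)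
  | .andL C φ, h, x => C.evalWith h x && φ.eval x
  | .andR φ C, h, x => φ.eval x && C.evalWith h x
  | .orL C φ, h, x => C.evalWith h x || φ.eval x
  | .orR φ C, h, x => φ.eval x || C.evalWith h x

/-- An assignment `x` is relevant for `C` if flipping the value at the hole
flips the value at the root. -/
def Ctx.Relevant {n : ℕ} (C : Ctx n) (x : Fin n → Bool) : Prop :=
  C.evalWith (fun _ => false) x ≠ C.evalWith (fun _ => true) x

/-- The number of negation nodes on the path from the root of the context to the hole. -/
def Ctx.negCountOnHolePath {n : ℕ} : Ctx n → ℕ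
  | .hole => 0
  | .not C => C.negCountOnHolePath + 1
  | .andL C _ => C.negCountOnHolePath
  | .andR _ C => C.negCountOnHolePath
  | .orL C _ => C.negCountOnHolePath
  | .orR _ C => C.negCountOnHolePath


lemma Ctx.evalWith_parity {n : ℕ} (C : Ctx n) (x : Fin n → Bool) (hx : C.Relevant x)
    (h : (Fin n → Bool) → Bool) :
    C.evalWith h x = xor (h x) (decide (C.negCountOnHolePath % 2 = 1)) := by
  induction C with
  | hole => simp [Ctx.evalWith, Ctx.negCountOnHolePath]
  | not C ih =>
      have hx' : C.Relevant x := by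
        simp only [Ctx.Relevant, Ctx.evalWith] at hx ⊢
        intro hc; exact hx (by rw [hc])
      simp only [Ctx.evalWith, Ctx.negCountOnHolePath, ih hx']
      rcases Nat.even_or_odd C.negCountOnHolePath with he | ho
      · have h1 : C.negCountOnHolePath % 2 = 0 := Nat.even_iff.mp he
        have h2 : (C.negCountOnHolePath + 1) % 2 = 1 := by omega
        simp [h1, h2]
      · have h1 : C.negCountOnHolePath % 2 = 1 := Nat.odd_iff.mp ho
        have h2 : (C.negCountOnHolePath + 1) % 2 = 0 := by omega
        simp [h1, h2]
  | andL C φ ih =>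
      have hφ : φ.eval x = true := by
        by_contra hφ
        simp only [Bool.not_eq_true] at hφ
        simp [Ctx.Relevant, Ctx.evalWith, hφ] at hx
      have hx' : C.Relevant x := by
        simp only [Ctx.Relevant, Ctx.evalWith, hφ, Bool.and_true] at hx; exact hx
      simp [Ctx.evalWith, Ctx.negCountOnHolePath, hφ, ih hx']
      exact decide_eq_decide.mpr Iff.rfl
  | andR φ C ih =>
      have hφ : φ.eval x = true := by
        by_contra hφ
        simp only [Bool.not_eq_true] at hφ
        simp [Ctx.Relevant, Ctx.evalWith, hφ] at hx
      have hx' : C.Relevant x := by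
        simp only [Ctx.Relevant, Ctx.evalWith, hφ, Bool.true_and] at hx; exact hx
      simp [Ctx.evalWith, Ctx.negCountOnHolePath, hφ, ih hx']
      exact decide_eq_decide.mpr Iff.rfl
  | orL C φ ih =>
      have hφ : φ.eval x = false := by
        by_contra hφ
        simp only [Bool.not_eq_false] at hφ
        simp [Ctx.Relevant, Ctx.evalWith, hφ] at hx
      have hx' : C.Relevant x := by
        simp only [Ctx.Relevant, Ctx.evalWith, hφ, Bool.or_false] at hx; exact hx
      simp [Ctx.evalWith, Ctx.negCountOnHolePath, hφ, ih hx']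
      exact decide_eq_decide.mpr Iff.rfl
  | orR φ C ih =>
      have hφ : φ.eval x = false := by
        by_contra hφ
        simp only [Bool.not_eq_false] at hφ
        simp [Ctx.Relevant, Ctx.evalWith, hφ] at hx
      have hx' : C.Relevant x := by
        simp only [Ctx.Relevant, Ctx.evalWith, hφ, Bool.false_or] at hx; exact hx
      simp [Ctx.evalWith, Ctx.negCountOnHolePath, hφ, ih hx']
      exact decide_eq_decide.mpr Iff.rfl

lemma Ctx.eval_fill {n : ℕ} (C : Ctx n) (ψ : BFormula n) (x : Fin n → Bool) :
    (C.fill ψ).eval x = C.evalWith (fun y => ψ.eval y) x := by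
  induction C with
  | hole => rfl
  | not C ih => simp [Ctx.fill, Ctx.evalWith, BFormula.eval, ih]
  | andL C φ ih => simp [Ctx.fill, Ctx.evalWith, BFormula.eval, ih]
  | andR φ C ih => simp [Ctx.fill, Ctx.evalWith, BFormula.eval, ih]
  | orL C φ ih => simp [Ctx.fill, Ctx.evalWith, BFormula.eval, ih]
  | orR φ C ih => simp [Ctx.fill, Ctx.evalWith, BFormula.eval, ih]

/-- For a relevant assignment, the root value equals the hole value XORed with the
parity of the number of negations on the hole path: relevant examples are correlated
when this parity is even and anticorrelated when it is odd. -/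
theorem impact_relevant_parity_correlation
    (n : ℕ) (C : Ctx n) (ψ : BFormula n) (x : Fin n → Bool) (hx : C.Relevant x) :
    (C.fill ψ).eval x = xor (ψ.eval x) (decide (C.negCountOnHolePath % 2 = 1)) := by
  rw [Ctx.eval_fill]
  exact Ctx.evalWith_parity C x hx _
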